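/- Let β ∈ (1,∞), c ≥ 1, d ≥ 1, and let B be any locally concave function on Ω_{2^{βd}c}. If P₁, P₂, …, P_{2^d} are points of Ω_c and their average P = 2^{−d}(P₁ + P₂ + … + P_{2^d}) also lies in Ω_c, then B(P) ≥ 2^{−d} Σ_{k=1}^{2^d} B(P_k). -/

import Mathlib

open Set Finset

noncomputable section

/-- The hyperbolic domain `Ω_c = {(w,v) ∈ (0,∞)² : 1 ≤ w v^{β−1} ≤ c}`. -/
def Omega (β c : ℝ) : Set (ℝ × ℝ) :=
  {z | 0 < z.1 ∧ 0 < z.2 ∧ 1 ≤ z.1 * z.2 ^ (β - 1) ∧ z.1 * z.2 ^ (β - 1) ≤ c}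

/-- A function on a subset of `ℝ²` is locally concave if it is concave along every
line segment contained in its domain. -/
def LocallyConcaveOn (S : Set (ℝ × ℝ)) (B : ℝ × ℝ → ℝ) : Prop :=
  ∀ P Q : ℝ × ℝ, P ∈ S → Q ∈ S → segment ℝ P Q ⊆ S → ConcaveOn ℝ (segment ℝ P Q) B

private lemma convex_lowerSet (β : ℝ) (hβ : 1 < β) :
    Convex ℝ {z : ℝ × ℝ | 0 < z.1 ∧ 0 < z.2 ∧ 1 ≤ z.1 * z.2 ^ (β - 1)} := by
  rintro x ⟨hx1, hx2, hx3⟩ y ⟨hy1, hy2, hy3⟩ a b ha hb hab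
  have hβ1 : (0:ℝ) ≤ β - 1 := by linarith
  have hfst : (a • x + b • y).1 = a * x.1 + b * y.1 := by
    simp [Prod.fst_add, smul_eq_mul]
  have hsnd : (a • x + b • y).2 = a * x.2 + b * y.2 := by
    simp [Prod.snd_add, smul_eq_mul]
  have h1pos : (0:ℝ) < a * x.1 + b * y.1 := by
    have := (convex_Ioi (0:ℝ)) hx1 hy1 ha hb hab
    simpa [smul_eq_mul] using this
  have h2pos : (0:ℝ) < a * x.2 + b * y.2 := by
    have := (convex_Ioi (0:ℝ)) hx2 hy2 ha hb hab
    simpa [smul_eq_mul] using this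
  refine ⟨by rw [hfst]; exact h1pos, by rw [hsnd]; exact h2pos, ?_⟩
  rw [hfst, hsnd]
  have g1 : x.1 ^ a * y.1 ^ b ≤ a * x.1 + b * y.1 :=
    Real.geom_mean_le_arith_mean2_weighted ha hb hx1.le hy1.le hab
  have g2 : x.2 ^ a * y.2 ^ b ≤ a * x.2 + b * y.2 :=
    Real.geom_mean_le_arith_mean2_weighted ha hb hx2.le hy2.le hab
  have h2 : (x.2 ^ a * y.2 ^ b) ^ (β - 1) ≤ (a * x.2 + b * y.2) ^ (β - 1) :=
    Real.rpow_le_rpow (by positivity) g2 hβ1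
  have e1 : (x.1 ^ a * y.1 ^ b) * (x.2 ^ a * y.2 ^ b) ^ (β - 1)
      = (x.1 * x.2 ^ (β - 1)) ^ a * (y.1 * y.2 ^ (β - 1)) ^ b := by
    rw [Real.mul_rpow (by positivity) (by positivity),
        Real.mul_rpow hx1.le (by positivity),
        Real.mul_rpow hy1.le (by positivity),
        ← Real.rpow_mul hx2.le, ← Real.rpow_mul hy2.le,
        ← Real.rpow_mul hx2.le, ← Real.rpow_mul hy2.le,
        mul_comm (β - 1) a, mul_comm (β - 1) b]
    ring
  have hk1 : (1:ℝ) ≤ (x.1 * x.2 ^ (β - 1)) ^ a := Real.one_le_rpow hx3 ha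
  have hk2 : (1:ℝ) ≤ (y.1 * y.2 ^ (β - 1)) ^ b := Real.one_le_rpow hy3 hb
  have key : (1:ℝ) ≤ (x.1 ^ a * y.1 ^ b) * (x.2 ^ a * y.2 ^ b) ^ (β - 1) := by
    rw [e1]; nlinarith
  calc (1:ℝ) ≤ (x.1 ^ a * y.1 ^ b) * (x.2 ^ a * y.2 ^ b) ^ (β - 1) := key
    _ ≤ (a * x.1 + b * y.1) * (a * x.2 + b * y.2) ^ (β - 1) := by
        apply mul_le_mul g1 h2 (by positivity) h1pos.le

private lemma upper_of_le (β : ℝ) (hβ : 1 < β) {c₁ : ℝ} {x M : ℝ × ℝ}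
    (hM : M ∈ Omega β c₁) (h1 : x.1 ≤ 2 * M.1) (h2 : x.2 ≤ 2 * M.2)
    (hx2 : 0 < x.2) (hx1pos : 0 ≤ x.1) :
    x.1 * x.2 ^ (β - 1) ≤ 2 ^ β * c₁ := by
  obtain ⟨hM1, hM2, _, hMc⟩ := hM
  have hβ1 : (0:ℝ) ≤ β - 1 := by linarith
  have step : x.1 * x.2 ^ (β - 1) ≤ (2 * M.1) * (2 * M.2) ^ (β - 1) :=
    mul_le_mul h1 (Real.rpow_le_rpow hx2.le h2 hβ1) (by positivity) (by positivity)
  have e : (2 * M.1) * (2 * M.2) ^ (β - 1) = 2 ^ β * (M.1 * M.2 ^ (β - 1)) := by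
    rw [Real.mul_rpow (by norm_num) hM2.le]
    have h2b : (2:ℝ) ^ β = 2 ^ (1:ℝ) * 2 ^ (β - 1) := by
      rw [← Real.rpow_add (by norm_num : (0:ℝ) < 2)]; norm_num
    rw [h2b, Real.rpow_one]; ring
  have hfin : 2 ^ β * (M.1 * M.2 ^ (β - 1)) ≤ 2 ^ β * c₁ :=
    mul_le_mul_of_nonneg_left hMc (Real.rpow_nonneg (by norm_num) β)
  linarith [step, e ▸ step]

private lemma Omega_mono (β : ℝ) {c c' : ℝ} (h : c ≤ c') : Omega β c ⊆ Omega β c' :=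
  fun _ hz => ⟨hz.1, hz.2.1, hz.2.2.1, hz.2.2.2.trans h⟩

private lemma sum_split {M : Type*} [AddCommMonoid M] (d : ℕ)
    (e : Fin (2 ^ d) × Fin 2 ≃ Fin (2 ^ (d + 1))) (f : Fin (2 ^ (d + 1)) → M) :
    ∑ k, f k = (∑ i, f (e (i, 0))) + (∑ i, f (e (i, 1))) := by
  rw [← Equiv.sum_comp e f, Fintype.sum_prod_type]
  simp [Fin.sum_univ_two, Finset.sum_add_distrib]

private lemma key_ind (β : ℝ) (hβ : 1 < β) (c : ℝ) (hc : 1 ≤ c) :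
    ∀ (d : ℕ) (c₁ : ℝ), c ≤ c₁ →
      ∀ B : ℝ × ℝ → ℝ, LocallyConcaveOn (Omega β (2 ^ (β * d) * c₁)) B →
      ∀ P : Fin (2 ^ d) → ℝ × ℝ, (∀ k, P k ∈ Omega β c) →
      ((2:ℝ) ^ d)⁻¹ • ∑ k, P k ∈ Omega β c₁ →
      B (((2:ℝ) ^ d)⁻¹ • ∑ k, P k) ≥ ((2:ℝ) ^ d)⁻¹ * ∑ k, B (P k) := by
  intro d
  induction d with
  | zero =>
    intro c₁ _ B _ P _ _
    have h1 : ∑ k : Fin (2 ^ 0), P k = P 0 := Fin.sum_univ_one P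
    have h2 : ∑ k : Fin (2 ^ 0), B (P k) = B (P 0) := Fin.sum_univ_one fun k => B (P k)
    rw [h1, h2]
    simp
  | succ d ih =>
    intro c₁ hcc₁ B hB P hP havg
    have hc₁pos : (0:ℝ) < c₁ := by linarith
    have hβ1 : (0:ℝ) ≤ β - 1 := by linarith
    have h2β1 : (1:ℝ) ≤ 2 ^ β := Real.one_le_rpow one_le_two (by linarith)
    set e : Fin (2 ^ d) × Fin 2 ≃ Fin (2 ^ (d + 1)) :=
      finProdFinEquiv.trans (finCongr (pow_succ 2 d).symm) with he_def
    set Q : Fin 2 → Fin (2 ^ d) → ℝ × ℝ := fun j i => P (e (i, j)) with hQ_def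
    have hsplitP : ∑ k, P k = (∑ i, Q 0 i) + (∑ i, Q 1 i) := sum_split d e P
    have hsplitB : ∑ k, B (P k) = (∑ i, B (Q 0 i)) + (∑ i, B (Q 1 i)) :=
      sum_split d e fun k => B (P k)
    set A : ℝ × ℝ := ((2:ℝ) ^ d)⁻¹ • ∑ i, Q 0 i with hA_def
    set A' : ℝ × ℝ := ((2:ℝ) ^ d)⁻¹ • ∑ i, Q 1 i with hA'_def
    set Mv : ℝ × ℝ := ((2:ℝ) ^ (d + 1))⁻¹ • ∑ k, P k with hM_def
    have hsc : (2:ℝ) * ((2:ℝ) ^ (d + 1))⁻¹ = ((2:ℝ) ^ d)⁻¹ := by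
      rw [pow_succ, mul_inv]
      field_simp
    have hM2 : A + A' = (2:ℝ) • Mv := by
      rw [hM_def, smul_smul, hsc, hsplitP, smul_add, hA_def, hA'_def]
    set S : Set (ℝ × ℝ) := {z | 0 < z.1 ∧ 0 < z.2 ∧ 1 ≤ z.1 * z.2 ^ (β - 1)} with hS_def
    have hconv : Convex ℝ S := convex_lowerSet β hβ
    have havgS : ∀ j, (((2:ℝ) ^ d)⁻¹ • ∑ i, Q j i) ∈ S := by
      intro j
      have hw : ∑ _i : Fin (2 ^ d), ((2:ℝ) ^ d)⁻¹ = 1 := by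
        rw [Finset.sum_const, Finset.card_univ, Fintype.card_fin, nsmul_eq_mul]
        push_cast
        field_simp
      have := hconv.sum_mem (t := Finset.univ) (w := fun _ : Fin (2 ^ d) => ((2:ℝ) ^ d)⁻¹)
        (z := Q j) (fun _ _ => by positivity) hw
        (fun i _ => ⟨(hP _).1, (hP _).2.1, (hP _).2.2.1⟩)
      rwa [← Finset.smul_sum] at this
    have hAS : A ∈ S := havgS 0
    have hA'S : A' ∈ S := havgS 1
    obtain ⟨hA1, hA2, hA3⟩ := hAS
    obtain ⟨hA'1, hA'2, hA'3⟩ := hA'S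
    obtain ⟨hMv1, hMv2, hMv3, hMv4⟩ := havg
    have hfst : A.1 + A'.1 = 2 * Mv.1 := by
      have := congrArg Prod.fst hM2
      simpa [smul_eq_mul] using this
    have hsnd : A.2 + A'.2 = 2 * Mv.2 := by
      have := congrArg Prod.snd hM2
      simpa [smul_eq_mul] using this
    have hA_le1 : A.1 ≤ 2 * Mv.1 := by linarith
    have hA_le2 : A.2 ≤ 2 * Mv.2 := by linarith
    have hA'_le1 : A'.1 ≤ 2 * Mv.1 := by linarith
    have hA'_le2 : A'.2 ≤ 2 * Mv.2 := by linarith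
    have havgΩ : Mv ∈ Omega β c₁ := ⟨hMv1, hMv2, hMv3, hMv4⟩
    have hAmem : A ∈ Omega β (2 ^ β * c₁) :=
      ⟨hA1, hA2, hA3, upper_of_le β hβ havgΩ hA_le1 hA_le2 hA2 hA1.le⟩
    have hA'mem : A' ∈ Omega β (2 ^ β * c₁) :=
      ⟨hA'1, hA'2, hA'3, upper_of_le β hβ havgΩ hA'_le1 hA'_le2 hA'2 hA'1.le⟩
    have hseg_sub : segment ℝ A A' ⊆ Omega β (2 ^ β * c₁) := by
      rintro x ⟨a, b, ha, hb, hab, rfl⟩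
      obtain ⟨hx1, hx2, hx3⟩ := hconv ⟨hA1, hA2, hA3⟩ ⟨hA'1, hA'2, hA'3⟩ ha hb hab
      refine ⟨hx1, hx2, hx3, upper_of_le β hβ havgΩ ?_ ?_ hx2 hx1.le⟩
      · have hco : (a • A + b • A').1 = a * A.1 + b * A'.1 := by
          simp [Prod.fst_add, smul_eq_mul]
        rw [hco]
        nlinarith [mul_le_mul_of_nonneg_left hA_le1 ha,
          mul_le_mul_of_nonneg_left hA'_le1 hb]
      · have hco : (a • A + b • A').2 = a * A.2 + b * A'.2 := by
          simp [Prod.snd_add, smul_eq_mul]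
        rw [hco]
        nlinarith [mul_le_mul_of_nonneg_left hA_le2 ha,
          mul_le_mul_of_nonneg_left hA'_le2 hb]
    have hcast : β * ((d + 1 : ℕ) : ℝ) = β * (d : ℝ) + β := by push_cast; ring
    have hdom : (2:ℝ) ^ (β * (d : ℝ) + β) * c₁ = 2 ^ (β * (d : ℝ)) * (2 ^ β * c₁) := by
      rw [Real.rpow_add (by norm_num : (0:ℝ) < 2)]; ring
    rw [hcast, hdom] at hB
    have h2βd : (2:ℝ) ^ β * c₁ ≤ 2 ^ (β * (d : ℝ)) * (2 ^ β * c₁) := by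
      have h1 : (1:ℝ) ≤ 2 ^ (β * (d : ℝ)) := Real.one_le_rpow one_le_two (by positivity)
      have h0 : (0:ℝ) ≤ 2 ^ β * c₁ := by positivity
      exact le_mul_of_one_le_left h0 h1
    have hsub1 : Omega β (2 ^ β * c₁) ⊆ Omega β (2 ^ (β * (d : ℝ)) * (2 ^ β * c₁)) :=
      Omega_mono β h2βd
    have hconc := hB A A' (hsub1 hAmem) (hsub1 hA'mem) (hseg_sub.trans hsub1)
    have hmid := hconc.2 (left_mem_segment ℝ A A') (right_mem_segment ℝ A A')
      (by norm_num : (0:ℝ) ≤ 2⁻¹) (by norm_num : (0:ℝ) ≤ 2⁻¹) (by norm_num)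
    have hMv_eq : Mv = (2⁻¹ : ℝ) • A + (2⁻¹ : ℝ) • A' := by
      have h := congrArg (fun z => (2⁻¹ : ℝ) • z) hM2
      simp only [smul_add, smul_smul] at h
      rw [show (2⁻¹ : ℝ) * 2 = 1 by norm_num, one_smul] at h
      exact h.symm
    rw [← hMv_eq] at hmid
    have hc' : c ≤ 2 ^ β * c₁ :=
      hcc₁.trans (le_mul_of_one_le_left hc₁pos.le h2β1)
    have ih0 := ih (2 ^ β * c₁) hc' B hB (Q 0) (fun i => hP _) hAmem
    have ih1 := ih (2 ^ β * c₁) hc' B hB (Q 1) (fun i => hP _) hA'mem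
    rw [← hA_def] at ih0
    rw [← hA'_def] at ih1
    rw [hsplitB]
    have hinv : ((2:ℝ) ^ (d + 1))⁻¹ = 2⁻¹ * ((2:ℝ) ^ d)⁻¹ := by
      rw [pow_succ, mul_inv]; ring
    rw [hinv]
    simp only [smul_eq_mul] at hmid
    linarith [hmid, ih0, ih1]

theorem locally_concave_dyadic_average (β : ℝ) (hβ : 1 < β) (c : ℝ) (hc : 1 ≤ c)
    (d : ℕ) (hd : 1 ≤ d)
    (B : ℝ × ℝ → ℝ) (hB : LocallyConcaveOn (Omega β (2 ^ (β * d) * c)) B)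
    (P : Fin (2 ^ d) → ℝ × ℝ) (hP : ∀ k, P k ∈ Omega β c)
    (havg : ((2 : ℝ) ^ d)⁻¹ • ∑ k, P k ∈ Omega β c) :
    B (((2 : ℝ) ^ d)⁻¹ • ∑ k, P k) ≥ ((2 : ℝ) ^ d)⁻¹ * ∑ k, B (P k) :=
  key_ind β hβ c hc d c le_rfl B hB P hP havg

end
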